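/- Let A be SPD, n ≥ 2, v = A^{-n} f, z = A^{-(n-1)} f, and let z', v' be vectors with v̄ := A^{-1} z'. If ‖z' - z‖_{A^{-1}} ≤ με‖z‖_{A^{-1}} and ‖v' - v̄‖_A ≤ νε‖v̄‖_A for some μ, ν, ε > 0, then ‖v' - v‖_A ≤ (μ + ν + μνε)·ε·‖v‖_A. -/

import Mathlib

open Matrix Real

noncomputable def matPow {N : ℕ} (W : Matrix (Fin N) (Fin N) ℝ) (D : Fin N → ℝ) (γ : ℝ) :
    Matrix (Fin N) (Fin N) ℝ :=
  W * Matrix.diagonal (fun i => D i ^ γ) * Wᵀ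

noncomputable def wnorm {N : ℕ} (W : Matrix (Fin N) (Fin N) ℝ) (D : Fin N → ℝ) (γ : ℝ)
    (v : Fin N → ℝ) : ℝ :=
  Real.sqrt (v ⬝ᵥ (matPow W D γ).mulVec v)

noncomputable def phiAux {N : ℕ} (W : Matrix (Fin N) (Fin N) ℝ) (D : Fin N → ℝ) (γ : ℝ)
    (x : Fin N → ℝ) : EuclideanSpace ℝ (Fin N) :=
  WithLp.toLp 2 (fun i => D i ^ (γ/2) * (Wᵀ *ᵥ x) i)

lemma wnorm_eq {N : ℕ} (W : Matrix (Fin N) (Fin N) ℝ) (D : Fin N → ℝ) (hD : ∀ i, 0 < D i)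
    (γ : ℝ) (x : Fin N → ℝ) : wnorm W D γ x = ‖phiAux W D γ x‖ := by
  rw [EuclideanSpace.norm_eq]
  unfold wnorm matPow phiAux
  congr 1
  rw [← Matrix.mulVec_mulVec, ← Matrix.mulVec_mulVec, Matrix.dotProduct_mulVec,
    ← Matrix.mulVec_transpose]
  simp only [PiLp.toLp_apply, Matrix.mulVec_diagonal, dotProduct, Real.norm_eq_abs, sq_abs]
  refine Finset.sum_congr rfl fun i _ => ?_
  have h2 : ((D i) ^ (γ/2)) ^ (2:ℕ) = D i ^ γ := by
    rw [← Real.rpow_natCast ((D i) ^ (γ/2)) 2, ← Real.rpow_mul (hD i).le]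
    norm_num
  rw [mul_pow, h2]; ring

lemma phiAux_inv {N : ℕ} (W : Matrix (Fin N) (Fin N) ℝ) (D : Fin N → ℝ)
    (hW : Wᵀ * W = 1) (hD : ∀ i, 0 < D i) (y : Fin N → ℝ) :
    phiAux W D 1 ((matPow W D (-1)) *ᵥ y) = phiAux W D (-1) y := by
  ext i
  unfold phiAux matPow
  simp only [PiLp.toLp_apply]
  rw [Matrix.mulVec_mulVec]
  have : Wᵀ * (W * Matrix.diagonal (fun i => D i ^ (-1:ℝ)) * Wᵀ)
      = Matrix.diagonal (fun i => D i ^ (-1:ℝ)) * Wᵀ := by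
    rw [← Matrix.mul_assoc, ← Matrix.mul_assoc, hW, Matrix.one_mul]
  rw [this, ← Matrix.mulVec_mulVec, Matrix.mulVec_diagonal]
  have : D i ^ ((1:ℝ)/2) * (D i ^ (-1:ℝ)) = D i ^ ((-1:ℝ)/2) := by
    rw [← Real.rpow_add (hD i)]; norm_num
  rw [← mul_assoc, this]

lemma matPow_comp {N : ℕ} (W : Matrix (Fin N) (Fin N) ℝ) (D : Fin N → ℝ)
    (hW : Wᵀ * W = 1) (hD : ∀ i, 0 < D i) (γ δ : ℝ) :
    matPow W D γ * matPow W D δ = matPow W D (γ + δ) := by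
  unfold matPow
  have : Wᵀ * (W * Matrix.diagonal (fun i => D i ^ δ))
      = Matrix.diagonal (fun i => D i ^ δ) := by
    rw [← Matrix.mul_assoc, hW, Matrix.one_mul]
  calc W * Matrix.diagonal (fun i => D i ^ γ) * Wᵀ *
        (W * Matrix.diagonal (fun i => D i ^ δ) * Wᵀ)
      = W * Matrix.diagonal (fun i => D i ^ γ) *
        (Wᵀ * (W * Matrix.diagonal (fun i => D i ^ δ))) * Wᵀ := by
        simp only [Matrix.mul_assoc]
    _ = W * (Matrix.diagonal (fun i => D i ^ γ) * Matrix.diagonal (fun i => D i ^ δ)) * Wᵀ := by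
        rw [this, Matrix.mul_assoc W]
    _ = W * Matrix.diagonal (fun i => D i ^ (γ + δ)) * Wᵀ := by
        rw [Matrix.diagonal_mul_diagonal]
        have : (fun i => D i ^ γ * D i ^ δ) = fun i => D i ^ (γ + δ) :=
          funext fun i => (Real.rpow_add (hD i) γ δ).symm
        rw [this]

theorem stmt5 {N : ℕ} (W : Matrix (Fin N) (Fin N) ℝ) (D : Fin N → ℝ)
    (hW : Wᵀ * W = 1) (hD : ∀ i, 0 < D i)
    (n : ℕ) (hn : 2 ≤ n) (μ ν ε : ℝ) (hμ : 0 < μ) (hν : 0 < ν) (hε : 0 < ε)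
    (f z' v' : Fin N → ℝ)
    (v : Fin N → ℝ) (hv : v = (matPow W D (-(n : ℝ))).mulVec f)
    (z : Fin N → ℝ) (hz : z = (matPow W D (-((n : ℝ) - 1))).mulVec f)
    (vbar : Fin N → ℝ) (hvbar : vbar = (matPow W D (-1)).mulVec z')
    (hz' : wnorm W D (-1) (z' - z) ≤ μ * ε * wnorm W D (-1) z)
    (hv' : wnorm W D 1 (v' - vbar) ≤ ν * ε * wnorm W D 1 vbar) :
    wnorm W D 1 (v' - v) ≤ (μ + ν + μ * ν * ε) * ε * wnorm W D 1 v := by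
  have key : ∀ y, wnorm W D 1 ((matPow W D (-1)) *ᵥ y) = wnorm W D (-1) y := by
    intro y
    rw [wnorm_eq W D hD, wnorm_eq W D hD, phiAux_inv W D hW hD]
  have hvz : v = (matPow W D (-1)) *ᵥ z := by
    have he : (-1:ℝ) + -((n:ℝ) - 1) = -(n:ℝ) := by ring
    rw [hv, hz, Matrix.mulVec_mulVec, matPow_comp W D hW hD, he]
  have h1 : wnorm W D 1 (vbar - v) = wnorm W D (-1) (z' - z) := by
    rw [hvbar, hvz, ← Matrix.mulVec_sub, key]
  have h2 : wnorm W D 1 v = wnorm W D (-1) z := by rw [hvz, key]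
  -- translate to EuclideanSpace norms
  have phi_sub : ∀ x y, phiAux W D 1 (x - y) = phiAux W D 1 x - phiAux W D 1 y := by
    intro x y
    ext i
    simp [phiAux, Matrix.mulVec_sub, mul_sub]
  have tri : ∀ x y z : Fin N → ℝ,
      wnorm W D 1 (x - z) ≤ wnorm W D 1 (x - y) + wnorm W D 1 (y - z) := by
    intro x y z
    rw [wnorm_eq W D hD, wnorm_eq W D hD, wnorm_eq W D hD, phi_sub, phi_sub, phi_sub]
    exact norm_sub_le_norm_sub_add_norm_sub _ _ _
  have tbar : wnorm W D 1 vbar ≤ wnorm W D 1 v + wnorm W D 1 (vbar - v) := by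
    rw [wnorm_eq W D hD, wnorm_eq W D hD, wnorm_eq W D hD, phi_sub]
    exact norm_le_insert' _ _
  have hmain := tri v' vbar v
  have hb : wnorm W D 1 (vbar - v) ≤ μ * ε * wnorm W D 1 v := by
    rw [h1, h2]; exact hz'
  have hnn : 0 ≤ wnorm W D 1 v := Real.sqrt_nonneg _
  nlinarith [mul_pos hν hε, mul_pos hμ hε]
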